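/- Let M = (M_x)_{x∈X} and N = (N_y)_{y∈Y} be POVMs on ℂ^{d₁} and ℂ^{d₂}, and M' = (M'_x)_{x∈X'} and N' = (N'_y)_{y∈Y'} POVMs on ℂ^{d₁'} and ℂ^{d₂'}, with all outcome sets finite. Suppose M' ≤_h M and N' ≤_h N (M' is a hybrid processing of M and N' of N). Then every POVM reachable from (M', N') by the broadcasting-local-measurements-post-processing (BLMPP) protocol is also reachable from (M, N): for every e ∈ ℕ, every finite set Z, and every POVM (G_z)_{z∈Z} on ℂ^e, if there exist a channel Φ from e×e matrices to (d₁'·d₂')×(d₁'·d₂') matrices and a stochastic kernel β: Z × (X'×Y') → [0,1] with tr[ρ G_z] = Σ_{(x,y)∈X'×Y'} β(z|x,y) tr[Φ(ρ)(M'_x ⊗ N'_y)] for all ρ and z, then there exist a channel Φ' from e×e matrices to (d₁·d₂)×(d₁·d₂) matrices and a stochastic kernel β': Z × (X×Y) → [0,1] with tr[ρ G_z] = Σ_{(x,y)∈X×Y} β'(z|x,y) tr[Φ'(ρ)(M_x ⊗ N_y)] for all ρ and z. -/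

import Mathlib

open Kronecker Matrix
open scoped ComplexOrder

noncomputable section

/-- A linear map between matrix algebras is completely positive if it maps positive
semidefinite block matrices (with any finite number of blocks) to positive semidefinite
block matrices, blockwise. -/
def IsCPMap {m n : Type} [Fintype m] [DecidableEq m] [Fintype n] [DecidableEq n]
    (Φ : Matrix m m ℂ →ₗ[ℂ] Matrix n n ℂ) : Prop :=
  ∀ (k : ℕ) (A : Matrix (Fin k × m) (Fin k × m) ℂ), A.PosSemidef →
    (Matrix.of fun (p q : Fin k × n) =>
      Φ (Matrix.of fun a b => A (p.1, a) (q.1, b)) p.2 q.2).PosSemidef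

/-- A quantum channel: a trace-preserving completely positive linear map. -/
def IsChannel {m n : Type} [Fintype m] [DecidableEq m] [Fintype n] [DecidableEq n]
    (Φ : Matrix m m ℂ →ₗ[ℂ] Matrix n n ℂ) : Prop :=
  IsCPMap Φ ∧ ∀ ρ : Matrix m m ℂ, (Φ ρ).trace = ρ.trace

/-- A POVM with finite outcome set `X`: positive semidefinite effects summing to the identity. -/
def IsPOVM {X : Type} [Fintype X] {m : Type} [Fintype m] [DecidableEq m]
    (M : X → Matrix m m ℂ) : Prop :=
  (∀ x, (M x).PosSemidef) ∧ ∑ x, M x = 1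

/-- A PVM: a POVM all of whose effects are orthogonal projections. -/
def IsPVM {X : Type} [Fintype X] {m : Type} [Fintype m] [DecidableEq m]
    (M : X → Matrix m m ℂ) : Prop :=
  IsPOVM M ∧ ∀ x, (M x)ᴴ = M x ∧ M x * M x = M x

/-- `G` is generated through broadcasting from `M` and `N` if there is a channel `Φ`
such that `tr[Φ(ρ)(M x ⊗ N y)] = tr[ρ G x y]` for all `ρ, x, y`. -/
def GenByBroadcast {X Y : Type} [Fintype X] [Fintype Y]
    {d m n : Type} [Fintype d] [DecidableEq d] [Fintype m] [DecidableEq m]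
    [Fintype n] [DecidableEq n]
    (M : X → Matrix m m ℂ) (N : Y → Matrix n n ℂ)
    (G : X → Y → Matrix d d ℂ) : Prop :=
  ∃ Φ : Matrix d d ℂ →ₗ[ℂ] Matrix (m × n) (m × n) ℂ, IsChannel Φ ∧
    ∀ (ρ : Matrix d d ℂ) (x : X) (y : Y),
      (Φ ρ * (M x ⊗ₖ N y)).trace = (ρ * G x y).trace

/-- `M'` is a hybrid processing of `M`: there are a channel `Φ` and a stochastic kernel `β`
with `tr[ρ M'_z] = Σ_x β(z|x) tr[Φ(ρ) M_x]` for all `ρ, z`. -/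
def IsHybridProc {Z X : Type} [Fintype Z] [Fintype X]
    {d' d : Type} [Fintype d'] [DecidableEq d'] [Fintype d] [DecidableEq d]
    (M' : Z → Matrix d' d' ℂ) (M : X → Matrix d d ℂ) : Prop :=
  ∃ (Φ : Matrix d' d' ℂ →ₗ[ℂ] Matrix d d ℂ) (β : Z → X → ℝ),
    IsChannel Φ ∧ (∀ z x, 0 ≤ β z x ∧ β z x ≤ 1) ∧ (∀ x, ∑ z, β z x = 1) ∧
    ∀ (ρ : Matrix d' d' ℂ) (z : Z),
      (ρ * M' z).trace = ∑ x, (β z x : ℂ) * (Φ ρ * M x).trace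

/-! ### Auxiliary machinery -/

section Aux

/-- Dual (adjoint with respect to the bilinear trace pairing) of a linear map
between matrix algebras. -/
def dualM {m n : Type} [Fintype m] [DecidableEq m] [Fintype n] [DecidableEq n]
    (Φ : Matrix m m ℂ →ₗ[ℂ] Matrix n n ℂ) (B : Matrix n n ℂ) : Matrix m m ℂ :=
  Matrix.of fun j i => (Φ (Matrix.single i j 1) * B).trace

lemma trace_mul_eq_sum {m : Type} [Fintype m] (A B : Matrix m m ℂ) :
    (A * B).trace = ∑ i, ∑ j, A i j * B j i := by
  simp [Matrix.trace, Matrix.mul_apply, Matrix.diag]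

lemma trace_dualM {m n : Type} [Fintype m] [DecidableEq m] [Fintype n] [DecidableEq n]
    (Φ : Matrix m m ℂ →ₗ[ℂ] Matrix n n ℂ) (ρ : Matrix m m ℂ) (B : Matrix n n ℂ) :
    (Φ ρ * B).trace = (ρ * dualM Φ B).trace := by
  rw [trace_mul_eq_sum ρ (dualM Φ B)]
  have hρ : ρ = ∑ i, ∑ j, (ρ i j) • Matrix.single i j (1:ℂ) := by
    conv_lhs => rw [matrix_eq_sum_single ρ]
    refine Finset.sum_congr rfl fun i _ => Finset.sum_congr rfl fun j _ => ?_
    rw [smul_single, smul_eq_mul, mul_one]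
  conv_lhs => rw [hρ]
  simp only [map_sum, LinearMap.map_smul, Finset.sum_mul, Matrix.smul_mul, Matrix.trace_sum,
    Matrix.trace_smul, smul_eq_mul]
  rfl

lemma eq_of_forall_trace {m : Type} [Fintype m] [DecidableEq m] (A B : Matrix m m ℂ)
    (h : ∀ ρ : Matrix m m ℂ, (ρ * A).trace = (ρ * B).trace) : A = B := by
  ext i j
  have := h (Matrix.single j i 1)
  rw [trace_mul_eq_sum, trace_mul_eq_sum] at this
  simpa [Matrix.single, ite_and, Finset.sum_ite_eq] using this

section lkron
variable {m m' n n' : Type} [Fintype m] [DecidableEq m] [Fintype m'] [DecidableEq m']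
  [Fintype n] [DecidableEq n] [Fintype n'] [DecidableEq n']

set_option linter.unusedSectionVars false

/-- `Φ ⊗ id` on the left factor. -/
def lkron (Φ : Matrix m m ℂ →ₗ[ℂ] Matrix m' m' ℂ) :
    Matrix (m × n) (m × n) ℂ →ₗ[ℂ] Matrix (m' × n) (m' × n) ℂ where
  toFun A := Matrix.of fun p q => Φ (A.submatrix (fun i => (i, p.2)) (fun j => (j, q.2))) p.1 q.1
  map_add' A B := by
    ext p q : 2
    simp [Matrix.submatrix_add, Matrix.add_apply]
  map_smul' c A := by
    ext p q : 2
    simp [Matrix.submatrix_smul, Matrix.smul_apply]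

/-- `id ⊗ Φ` on the right factor. -/
def rkron (Φ : Matrix n n ℂ →ₗ[ℂ] Matrix n' n' ℂ) :
    Matrix (m × n) (m × n) ℂ →ₗ[ℂ] Matrix (m × n') (m × n') ℂ where
  toFun A := Matrix.of fun p q => Φ (A.submatrix (fun i => (p.1, i)) (fun j => (q.1, j))) p.2 q.2
  map_add' A B := by
    ext p q : 2
    simp [Matrix.submatrix_add, Matrix.add_apply]
  map_smul' c A := by
    ext p q : 2
    simp [Matrix.submatrix_smul, Matrix.smul_apply]

lemma lkron_trace (Φ : Matrix m m ℂ →ₗ[ℂ] Matrix m' m' ℂ)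
    (hΦ : ∀ ρ, (Φ ρ).trace = ρ.trace) (A : Matrix (m × n) (m × n) ℂ) :
    ((lkron Φ A : Matrix (m' × n) (m' × n) ℂ)).trace = A.trace := by
  simp only [Matrix.trace, Matrix.diag, Fintype.sum_prod_type, lkron, LinearMap.coe_mk,
    AddHom.coe_mk, Matrix.of_apply]
  rw [Finset.sum_comm, Finset.sum_comm (f := fun x y => A (x, y) (x, y))]
  refine Finset.sum_congr rfl fun b _ => ?_
  have := hΦ (A.submatrix (fun i => (i, b)) (fun j => (j, b)))
  simpa [Matrix.trace, Matrix.diag] using this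

lemma rkron_trace (Φ : Matrix n n ℂ →ₗ[ℂ] Matrix n' n' ℂ)
    (hΦ : ∀ ρ, (Φ ρ).trace = ρ.trace) (A : Matrix (m × n) (m × n) ℂ) :
    ((rkron Φ A : Matrix (m × n') (m × n') ℂ)).trace = A.trace := by
  simp only [Matrix.trace, Matrix.diag, Fintype.sum_prod_type, rkron, LinearMap.coe_mk,
    AddHom.coe_mk, Matrix.of_apply]
  refine Finset.sum_congr rfl fun b _ => ?_
  have := hΦ (A.submatrix (fun i => (b, i)) (fun j => (b, j)))
  simpa [Matrix.trace, Matrix.diag] using this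

lemma lkron_cp (Φ : Matrix m m ℂ →ₗ[ℂ] Matrix m' m' ℂ) (hΦ : IsCPMap Φ) :
    IsCPMap (lkron Φ : Matrix (m × n) (m × n) ℂ →ₗ[ℂ] Matrix (m' × n) (m' × n) ℂ) := by
  intro k A hA
  set c := Fintype.card n with hc
  let e : Fin k × n ≃ Fin (k * c) :=
    (Equiv.prodCongr (Equiv.refl (Fin k)) (Fintype.equivFin n)).trans finProdFinEquiv
  let σ : Fin (k * c) × m → Fin k × (m × n) :=
    fun r => ((e.symm r.1).1, (r.2, (e.symm r.1).2))
  have hC := hΦ (k * c) (A.submatrix σ σ) (hA.submatrix σ)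
  let τ : Fin k × (m' × n) → Fin (k * c) × m' := fun p => (e (p.1, p.2.2), p.2.1)
  have hD := hC.submatrix τ
  have heq : (Matrix.of fun (p q : Fin k × (m' × n)) =>
      (lkron Φ) (Matrix.of fun a b => A (p.1, a) (q.1, b)) p.2 q.2) =
      ((Matrix.of fun (p q : Fin (k * c) × m') =>
        Φ (Matrix.of fun a b => (A.submatrix σ σ) (p.1, a) (q.1, b)) p.2 q.2).submatrix τ τ) := by
    ext p q : 2
    simp only [Matrix.submatrix_apply, Matrix.of_apply, lkron, LinearMap.coe_mk, AddHom.coe_mk]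
    have harg : (Matrix.of fun a b => A (p.1, a) (q.1, b)).submatrix
        (fun i => (i, p.2.2)) (fun j => (j, q.2.2)) =
        Matrix.of fun a b => (A.submatrix σ σ) ((τ p).1, a) ((τ q).1, b) := by
      ext i j : 2
      simp only [σ, τ, Matrix.of_apply, Matrix.submatrix_apply, Equiv.symm_apply_apply]
    rw [harg]
    simp only [Matrix.submatrix_apply, τ]
  exact heq ▸ hD

lemma rkron_cp (Φ : Matrix n n ℂ →ₗ[ℂ] Matrix n' n' ℂ) (hΦ : IsCPMap Φ) :
    IsCPMap (rkron Φ : Matrix (m × n) (m × n) ℂ →ₗ[ℂ] Matrix (m × n') (m × n') ℂ) := by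
  intro k A hA
  set c := Fintype.card m with hc
  let e : Fin k × m ≃ Fin (k * c) :=
    (Equiv.prodCongr (Equiv.refl (Fin k)) (Fintype.equivFin m)).trans finProdFinEquiv
  let σ : Fin (k * c) × n → Fin k × (m × n) :=
    fun r => ((e.symm r.1).1, ((e.symm r.1).2, r.2))
  have hC := hΦ (k * c) (A.submatrix σ σ) (hA.submatrix σ)
  let τ : Fin k × (m × n') → Fin (k * c) × n' := fun p => (e (p.1, p.2.1), p.2.2)
  have hD := hC.submatrix τ
  have heq : (Matrix.of fun (p q : Fin k × (m × n')) =>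
      (rkron Φ) (Matrix.of fun a b => A (p.1, a) (q.1, b)) p.2 q.2) =
      ((Matrix.of fun (p q : Fin (k * c) × n') =>
        Φ (Matrix.of fun a b => (A.submatrix σ σ) (p.1, a) (q.1, b)) p.2 q.2).submatrix τ τ) := by
    ext p q : 2
    simp only [Matrix.submatrix_apply, Matrix.of_apply, rkron, LinearMap.coe_mk, AddHom.coe_mk]
    have harg : (Matrix.of fun a b => A (p.1, a) (q.1, b)).submatrix
        (fun i => (p.2.1, i)) (fun j => (q.2.1, j)) =
        Matrix.of fun a b => (A.submatrix σ σ) ((τ p).1, a) ((τ q).1, b) := by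
      ext i j : 2
      simp only [σ, τ, Matrix.of_apply, Matrix.submatrix_apply, Equiv.symm_apply_apply]
    rw [harg]
    simp only [Matrix.submatrix_apply, τ]
  exact heq ▸ hD

lemma sum4 {α β : Type} [Fintype α] [Fintype β] (f : β → β → α → α → ℂ) (g : β → β → ℂ) :
    ∑ a : α, ∑ b : β, ∑ c : α, ∑ d : β, f b d a c * g d b
      = ∑ b : β, ∑ d : β, (∑ a : α, ∑ c : α, f b d a c) * g d b := by
  rw [Finset.sum_comm]
  refine Finset.sum_congr rfl fun b _ => ?_
  simp only [Finset.sum_mul]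
  calc ∑ a : α, ∑ c : α, ∑ d : β, f b d a c * g d b
      = ∑ a : α, ∑ d : β, ∑ c : α, f b d a c * g d b :=
        Finset.sum_congr rfl fun a _ => Finset.sum_comm
    _ = ∑ d : β, ∑ a : α, ∑ c : α, f b d a c * g d b := Finset.sum_comm

lemma sum4r {α β : Type} [Fintype α] [Fintype β] (f : α → α → β → β → ℂ) (g : α → α → ℂ) :
    ∑ a : α, ∑ b : β, ∑ c : α, ∑ d : β, f a c b d * g c a
      = ∑ a : α, ∑ c : α, (∑ b : β, ∑ d : β, f a c b d) * g c a := by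
  refine Finset.sum_congr rfl fun a _ => ?_
  simp only [Finset.sum_mul]
  calc ∑ b : β, ∑ c : α, ∑ d : β, f a c b d * g c a
      = ∑ c : α, ∑ b : β, ∑ d : β, f a c b d * g c a := Finset.sum_comm
    _ = _ := rfl

lemma trace_lkron_kron (Φ : Matrix m m ℂ →ₗ[ℂ] Matrix m' m' ℂ)
    (σ : Matrix (m × n) (m × n) ℂ) (A : Matrix m' m' ℂ) (C : Matrix n n ℂ) :
    ((lkron Φ σ : Matrix (m' × n) (m' × n) ℂ) * (A ⊗ₖ C)).trace
      = (σ * (dualM Φ A ⊗ₖ C)).trace := by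
  rw [trace_mul_eq_sum, trace_mul_eq_sum]
  simp only [Fintype.sum_prod_type, lkron, LinearMap.coe_mk, AddHom.coe_mk, Matrix.of_apply,
    Matrix.kroneckerMap_apply, ← mul_assoc]
  rw [sum4 (f := fun b d a c =>
        Φ (σ.submatrix (fun i => (i, b)) (fun j => (j, d))) a c * A c a)
      (g := fun d b => C d b),
    sum4 (f := fun b d i j => σ (i, b) (j, d) * dualM Φ A j i) (g := fun d b => C d b)]
  refine Finset.sum_congr rfl fun b _ => Finset.sum_congr rfl fun d _ => ?_
  congr 1
  have h := trace_dualM Φ (σ.submatrix (fun i => (i, b)) (fun j => (j, d))) A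
  rw [trace_mul_eq_sum, trace_mul_eq_sum] at h
  simpa using h

lemma trace_rkron_kron (Φ : Matrix n n ℂ →ₗ[ℂ] Matrix n' n' ℂ)
    (σ : Matrix (m × n) (m × n) ℂ) (A : Matrix m m ℂ) (C : Matrix n' n' ℂ) :
    ((rkron Φ σ : Matrix (m × n') (m × n') ℂ) * (A ⊗ₖ C)).trace
      = (σ * (A ⊗ₖ dualM Φ C)).trace := by
  rw [trace_mul_eq_sum, trace_mul_eq_sum]
  simp only [Fintype.sum_prod_type, rkron, LinearMap.coe_mk, AddHom.coe_mk, Matrix.of_apply,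
    Matrix.kroneckerMap_apply]
  have hsw : ∀ (f : ℂ) (x y : ℂ), f * (x * y) = f * y * x := by intros; ring
  simp only [hsw]
  rw [sum4r (f := fun a c b d =>
        Φ (σ.submatrix (fun i => (a, i)) (fun j => (c, j))) b d * C d b)
      (g := fun c a => A c a),
    sum4r (f := fun a c b d => σ (a, b) (c, d) * dualM Φ C d b) (g := fun c a => A c a)]
  refine Finset.sum_congr rfl fun a _ => Finset.sum_congr rfl fun c _ => ?_
  congr 1
  have h := trace_dualM Φ (σ.submatrix (fun i => (a, i)) (fun j => (c, j))) C
  rw [trace_mul_eq_sum, trace_mul_eq_sum] at h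
  simpa using h

end lkron

lemma isCPMap_comp {m n p : Type} [Fintype m] [DecidableEq m] [Fintype n] [DecidableEq n]
    [Fintype p] [DecidableEq p]
    (Φ : Matrix m m ℂ →ₗ[ℂ] Matrix n n ℂ) (Ψ : Matrix n n ℂ →ₗ[ℂ] Matrix p p ℂ)
    (hΦ : IsCPMap Φ) (hΨ : IsCPMap Ψ) : IsCPMap (Ψ ∘ₗ Φ) := by
  intro k A hA
  have h2 := hΨ k _ (hΦ k A hA)
  exact h2

lemma kron_sum_smul {m n ι κ : Type} [Fintype m] [Fintype n] [Fintype ι] [Fintype κ]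
    (c : ι → ℂ) (e : κ → ℂ) (D : ι → Matrix m m ℂ) (F : κ → Matrix n n ℂ) :
    ((∑ i, c i • D i) ⊗ₖ (∑ j, e j • F j)) = ∑ i, ∑ j, (c i * e j) • (D i ⊗ₖ F j) := by
  ext p q : 2
  simp only [Matrix.kroneckerMap_apply, Matrix.sum_apply, Matrix.smul_apply, smul_eq_mul]
  rw [Finset.sum_mul_sum]
  refine Finset.sum_congr rfl fun i _ => Finset.sum_congr rfl fun j _ => ?_
  ring

end Aux
/-- Proposition `prop:Gset` for hybrid processings: if `M' ≤_h M` and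
`N' ≤_h N`, then every POVM reachable from `(M', N')` by the BLMPP protocol is also
reachable from `(M, N)`. -/
theorem statement16
    (d₁ d₂ d₁' d₂' : ℕ) (hd₁ : 0 < d₁) (hd₂ : 0 < d₂) (hd₁' : 0 < d₁') (hd₂' : 0 < d₂')
    (X Y X' Y' : Type) [Fintype X] [Fintype Y] [Fintype X'] [Fintype Y']
    (M : X → Matrix (Fin d₁) (Fin d₁) ℂ) (hM : IsPOVM M)
    (N : Y → Matrix (Fin d₂) (Fin d₂) ℂ) (hN : IsPOVM N)
    (M' : X' → Matrix (Fin d₁') (Fin d₁') ℂ) (hM' : IsPOVM M')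
    (N' : Y' → Matrix (Fin d₂') (Fin d₂') ℂ) (hN' : IsPOVM N')
    (hMM : IsHybridProc M' M) (hNN : IsHybridProc N' N)
    (e : ℕ) (Z : Type) [Fintype Z]
    (G : Z → Matrix (Fin e) (Fin e) ℂ) (hG : IsPOVM G)
    (Φ : Matrix (Fin e) (Fin e) ℂ →ₗ[ℂ] Matrix (Fin d₁' × Fin d₂') (Fin d₁' × Fin d₂') ℂ)
    (hΦ : IsChannel Φ)
    (β : Z → X' × Y' → ℝ)
    (hβ01 : ∀ z p, 0 ≤ β z p ∧ β z p ≤ 1) (hβ1 : ∀ p, ∑ z, β z p = 1)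
    (hrep : ∀ (ρ : Matrix (Fin e) (Fin e) ℂ) (z : Z),
      (ρ * G z).trace =
        ∑ p : X' × Y', (β z p : ℂ) * (Φ ρ * (M' p.1 ⊗ₖ N' p.2)).trace) :
    ∃ (Φ' : Matrix (Fin e) (Fin e) ℂ →ₗ[ℂ] Matrix (Fin d₁ × Fin d₂) (Fin d₁ × Fin d₂) ℂ)
      (β' : Z → X × Y → ℝ),
      IsChannel Φ' ∧ (∀ z p, 0 ≤ β' z p ∧ β' z p ≤ 1) ∧ (∀ p, ∑ z, β' z p = 1) ∧
      ∀ (ρ : Matrix (Fin e) (Fin e) ℂ) (z : Z),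
        (ρ * G z).trace =
          ∑ p : X × Y, (β' z p : ℂ) * (Φ' ρ * (M p.1 ⊗ₖ N p.2)).trace := by

  obtain ⟨Φ₁, β₁, hΦ₁, hβ₁01, hβ₁sum, h₁⟩ := hMM
  obtain ⟨Φ₂, β₂, hΦ₂, hβ₂01, hβ₂sum, h₂⟩ := hNN
  refine ⟨(rkron Φ₂) ∘ₗ (lkron Φ₁) ∘ₗ Φ,
    fun z p => ∑ q : X' × Y', β z q * β₁ q.1 p.1 * β₂ q.2 p.2, ?_, ?_, ?_, ?_⟩
  · constructor
    · exact isCPMap_comp _ _ (isCPMap_comp _ _ hΦ.1 (lkron_cp Φ₁ hΦ₁.1)) (rkron_cp Φ₂ hΦ₂.1)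
    · intro ρ
      simp only [LinearMap.comp_apply]
      rw [rkron_trace Φ₂ hΦ₂.2, lkron_trace Φ₁ hΦ₁.2, hΦ.2 ρ]
  · intro z p
    constructor
    · refine Finset.sum_nonneg fun q _ => ?_
      exact mul_nonneg (mul_nonneg (hβ01 z q).1 (hβ₁01 q.1 p.1).1) (hβ₂01 q.2 p.2).1
    · calc ∑ q : X' × Y', β z q * β₁ q.1 p.1 * β₂ q.2 p.2
          ≤ ∑ q : X' × Y', β₁ q.1 p.1 * β₂ q.2 p.2 := by
            refine Finset.sum_le_sum fun q _ => ?_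
            have h1 := (hβ01 z q).2
            have h2 := (hβ₁01 q.1 p.1).1
            have h3 := (hβ₂01 q.2 p.2).1
            nlinarith [mul_nonneg (mul_nonneg (sub_nonneg.2 h1) h2) h3]
        _ = (∑ x' : X', β₁ x' p.1) * (∑ y' : Y', β₂ y' p.2) := by
            rw [Finset.sum_mul_sum, Fintype.sum_prod_type]
        _ = 1 := by rw [hβ₁sum p.1, hβ₂sum p.2, mul_one]
  · intro p
    rw [Finset.sum_comm]
    calc ∑ q : X' × Y', ∑ z : Z, β z q * β₁ q.1 p.1 * β₂ q.2 p.2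
        = ∑ q : X' × Y', β₁ q.1 p.1 * β₂ q.2 p.2 := by
          refine Finset.sum_congr rfl fun q _ => ?_
          rw [← Finset.sum_mul, ← Finset.sum_mul, hβ1 q]
          ring
      _ = (∑ x' : X', β₁ x' p.1) * (∑ y' : Y', β₂ y' p.2) := by
          rw [Finset.sum_mul_sum, Fintype.sum_prod_type]
      _ = 1 := by rw [hβ₁sum p.1, hβ₂sum p.2, mul_one]
  · intro ρ z
    -- effect decompositions
    have hM'eq : ∀ x' : X', M' x' = ∑ x, (β₁ x' x : ℂ) • dualM Φ₁ (M x) := by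
      intro x'
      refine eq_of_forall_trace _ _ fun σ => ?_
      rw [h₁ σ x']
      simp only [Matrix.mul_sum, Matrix.mul_smul, Matrix.trace_sum, Matrix.trace_smul,
        smul_eq_mul]
      exact Finset.sum_congr rfl fun x _ => by rw [trace_dualM]
    have hN'eq : ∀ y' : Y', N' y' = ∑ y, (β₂ y' y : ℂ) • dualM Φ₂ (N y) := by
      intro y'
      refine eq_of_forall_trace _ _ fun σ => ?_
      rw [h₂ σ y']
      simp only [Matrix.mul_sum, Matrix.mul_smul, Matrix.trace_sum, Matrix.trace_smul,
        smul_eq_mul]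
      exact Finset.sum_congr rfl fun y _ => by rw [trace_dualM]
    have hT : ∀ (x : X) (y : Y),
        ((((rkron Φ₂) ∘ₗ (lkron Φ₁) ∘ₗ Φ) ρ) * (M x ⊗ₖ N y)).trace
          = (Φ ρ * (dualM Φ₁ (M x) ⊗ₖ dualM Φ₂ (N y))).trace := by
      intro x y
      simp only [LinearMap.comp_apply]
      rw [trace_rkron_kron, trace_lkron_kron]
    have hMN : ∀ q : X' × Y', (Φ ρ * (M' q.1 ⊗ₖ N' q.2)).trace
        = ∑ x, ∑ y, (β₁ q.1 x : ℂ) * (β₂ q.2 y : ℂ) *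
            ((((rkron Φ₂) ∘ₗ (lkron Φ₁) ∘ₗ Φ) ρ) * (M x ⊗ₖ N y)).trace := by
      intro q
      rw [hM'eq q.1, hN'eq q.2, kron_sum_smul]
      simp only [Matrix.mul_sum, Matrix.mul_smul, Matrix.trace_sum, Matrix.trace_smul,
        smul_eq_mul]
      exact Finset.sum_congr rfl fun x _ => Finset.sum_congr rfl fun y _ => by
        rw [hT x y]
    rw [hrep ρ z]
    simp only [hMN]
    rw [Fintype.sum_prod_type (f := fun p : X × Y =>
      ((∑ q : X' × Y', β z q * β₁ q.1 p.1 * β₂ q.2 p.2 : ℝ) : ℂ) *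
        ((((rkron Φ₂) ∘ₗ (lkron Φ₁) ∘ₗ Φ) ρ) * (M p.1 ⊗ₖ N p.2)).trace)]
    simp only [Finset.mul_sum]
    rw [Finset.sum_comm]
    refine Finset.sum_congr rfl fun x _ => ?_
    rw [Finset.sum_comm]
    refine Finset.sum_congr rfl fun y _ => ?_
    push_cast
    rw [Finset.sum_mul]
    refine Finset.sum_congr rfl fun q _ => ?_
    ring
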